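/- Let b be a regular (non-degenerate) bilinear form on a finite-dimensional vector space V over a field K, with b either symmetric or alternate, and let u ∈ GL(V) be a b-isometry. For every monic polynomial P ∈ K[x] with P(0) ≠ 0, the kernel of P(u) equals the b-orthogonal complement of the image of P^#(u). -/

import Mathlib

open Polynomial

/-- The reciprocal polynomial `P^#`. -/
noncomputable def recip {K : Type*} [Field K] (P : K[X]) : K[X] :=
  Polynomial.C (P.coeff 0)⁻¹ * P.reverse

theorem ker_eq_orthogonal_of_range {K V : Type*} [Field K] [AddCommGroup V] [Module K V]
    [FiniteDimensional K V]
    (B : V →ₗ[K] V →ₗ[K] K)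
    (hreg : B.Nondegenerate)
    (hsa : (∀ x y, B x y = B y x) ∨ (∀ x, B x x = 0))
    (u : V ≃ₗ[K] V)
    (hiso : ∀ x y, B (u x) (u y) = B x y)
    (P : K[X]) (hPm : P.Monic) (hP0 : P.coeff 0 ≠ 0) :
    ∀ x : V,
      x ∈ LinearMap.ker (Polynomial.aeval (u : Module.End K V) P) ↔
        ∀ y : V, B x ((Polynomial.aeval (u : Module.End K V) (recip P)) y) = 0 := by
  classical
  set e : Module.End K V := (u : Module.End K V) with he
  set v : Module.End K V := (u.symm : Module.End K V) with hv
  have hev : ∀ x : V, e (v x) = x := fun x => u.apply_symm_apply x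
  have hve : ∀ x : V, v (e x) = x := fun x => u.symm_apply_apply x
  have hiso' : ∀ x y : V, B (e x) (e y) = B x y := hiso
  have hevk : ∀ (k : ℕ) (x : V), (e^k) ((v^k) x) = x := by
    intro k
    induction k with
    | zero => intro x; simp
    | succ m ih =>
        intro x
        rw [pow_succ, pow_succ', Module.End.mul_apply, Module.End.mul_apply, hev, ih]
  have hvek : ∀ (k : ℕ) (x : V), (v^k) ((e^k) x) = x := by
    intro k
    induction k with
    | zero => intro x; simp
    | succ m ih =>
        intro x
        rw [pow_succ, pow_succ', Module.End.mul_apply, Module.End.mul_apply, hve, ih]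
  have hisok : ∀ (k : ℕ) (x y : V), B ((e^k) x) ((e^k) y) = B x y := by
    intro k
    induction k with
    | zero => intro x y; simp
    | succ m ih =>
        intro x y
        rw [pow_succ', Module.End.mul_apply, Module.End.mul_apply]
        exact (hiso' _ _).trans (ih x y)
  have hadj : ∀ (k : ℕ) (x y : V), B ((e^k) x) y = B x ((v^k) y) := by
    intro k x y
    conv_lhs => rw [← hevk k y]
    exact hisok k x ((v^k) y)
  have hadjP : ∀ (Q : K[X]) (x y : V),
      B ((aeval e Q) x) y = B x ((aeval v Q) y) := by
    intro Q x y
    have l1 : (aeval e Q) x = ∑ i ∈ Finset.range (Q.natDegree+1), Q.coeff i • (e^i) x := by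
      rw [aeval_eq_sum_range]
      simp [LinearMap.sum_apply, LinearMap.smul_apply]
    have l2 : (aeval v Q) y = ∑ i ∈ Finset.range (Q.natDegree+1), Q.coeff i • (v^i) y := by
      rw [aeval_eq_sum_range]
      simp [LinearMap.sum_apply, LinearMap.smul_apply]
    rw [l1, l2]
    simp only [map_sum, map_smul, LinearMap.sum_apply, LinearMap.smul_apply, smul_eq_mul]
    exact Finset.sum_congr rfl fun i _ => by rw [hadj i x y]
  set n := P.natDegree with hn
  have hrev : ∀ y : V, (aeval e P.reverse) y = (aeval v P) ((e^n) y) := by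
    intro y
    have l1 : (aeval e P.reverse) y
        = ∑ k ∈ Finset.range (n+1), P.reverse.coeff k • (e^k) y := by
      rw [aeval_eq_sum_range' (lt_of_le_of_lt P.reverse_natDegree_le (Nat.lt_succ_self n))]
      simp [LinearMap.sum_apply, LinearMap.smul_apply]
    have l2 : (aeval v P) ((e^n) y)
        = ∑ i ∈ Finset.range (n+1), P.coeff i • (v^i) ((e^n) y) := by
      rw [aeval_eq_sum_range' (Nat.lt_succ_self n)]
      simp [LinearMap.sum_apply, LinearMap.smul_apply]
    rw [l1, l2, ← Finset.sum_range_reflect]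
    refine Finset.sum_congr rfl fun i hi => ?_
    rw [Finset.mem_range, Nat.lt_succ_iff] at hi
    have h1 : P.reverse.coeff (n + 1 - 1 - i) = P.coeff i := by
      rw [coeff_reverse, revAt_le (by omega), hn]
      congr 1
      omega
    rw [h1]
    congr 1
    have h2 : (e^n) y = (e^i) ((e^(n-i)) y) := by
      rw [← Module.End.mul_apply, ← pow_add, Nat.add_sub_cancel' hi]
    rw [h2, hvek i]
    have h3 : n + 1 - 1 - i = n - i := by omega
    rw [h3]
  intro x
  have key : ∀ y : V, B x ((aeval e (recip P)) y)
      = (P.coeff 0)⁻¹ * B ((aeval e P) x) ((e^n) y) := by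
    intro y
    have h4 : (aeval e (recip P)) y = (P.coeff 0)⁻¹ • (aeval e P.reverse) y := by
      simp [recip, map_mul, aeval_C, Module.End.mul_apply, Algebra.smul_def]
    rw [h4, map_smul, smul_eq_mul, hrev y, ← hadjP P x ((e^n) y)]
  constructor
  · intro hx y
    rw [LinearMap.mem_ker] at hx
    rw [key y, hx]
    simp
  · intro hy
    rw [LinearMap.mem_ker]
    have hz : ∀ z : V, B ((aeval e P) x) z = 0 := by
      intro z
      have h5 := hy ((v^n) z)
      rw [key ((v^n) z), hevk n z] at h5
      exact (mul_eq_zero.mp h5).resolve_left (inv_ne_zero hP0)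
    exact hreg.1 _ hz
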